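/- Let X be the p-biased distribution on {0,1}^n with p ≤ 1/2 and H(p) = 2m/n for parameters m,n with m ≤ n/6. Define X̄ by: sample X; if |X| ≥ 0.9pn set X̄ = X, else let X̄ be uniform on {0,1}^n. Then X̄ has min-entropy at least 1.5m, i.e., Pr[X̄ = a] ≤ 2^{−1.5m} for every a ∈ {0,1}^n (for m sufficiently large, e.g. 2^{−1.8m} + 2^{−n} ≤ 2^{−1.5m}). -/

import Mathlib

open Finset
open scoped Classical

/-- The binary entropy function. -/
noncomputable def binEnt (p : ℝ) : ℝ :=
  -(p * Real.logb 2 p) - (1 - p) * Real.logb 2 (1 - p)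

/-- Hamming weight of a Boolean vector. -/
def wtB {n : ℕ} (y : Fin n → Bool) : ℕ := (univ.filter (fun i => y i)).card

/-- The `p`-biased product distribution on `{0,1}^n`. -/
noncomputable def pBiased (n : ℕ) (p : ℝ) (x : Fin n → Bool) : ℝ :=
  ∏ i, if x i then p else 1 - p

lemma pBiased_eq (n : ℕ) (p : ℝ) (x : Fin n → Bool) :
    pBiased n p x = p ^ (wtB x) * (1 - p) ^ (n - wtB x) := by
  rw [pBiased, Finset.prod_ite, Finset.prod_const, Finset.prod_const]
  have h := Finset.card_filter_add_card_filter_not (s := (univ : Finset (Fin n)))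
      (p := fun i => x i)
  simp only [Finset.card_univ, Fintype.card_fin] at h
  have : (univ.filter (fun i => ¬ x i)).card = n - wtB x := by
    simp only [wtB]; omega
  rw [this]
  congr 1

lemma sum_pBiased (n : ℕ) (p : ℝ) : ∑ x : Fin n → Bool, pBiased n p x = 1 := by
  have := (Fintype.prod_sum (ι := Fin n) (κ := fun _ => Bool) (R := ℝ)
    (fun _ b => if b then p else 1 - p)).symm
  simp only [pBiased]
  rw [this]
  simp

/-- Let `X` be `p`-biased with `H(p) = 2m/n`, `m ≤ n/6`, and let `X̄ = X` when
`|X| ≥ 0.9pn` and uniform otherwise.  Then (for `m` large enough that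
`2^{−1.8m}+2^{−n} ≤ 2^{−1.5m}`) `X̄` has min-entropy at least `1.5m`:
`Pr[X̄ = a] ≤ 2^{−1.5m}` for every `a`. -/
theorem stmt7 (n m : ℕ) (p : ℝ) (hp0 : 0 < p) (hp : p ≤ 1/2)
    (hH : binEnt p = 2 * m / n) (hmn : (m:ℝ) ≤ (n:ℝ) / 6)
    (hlarge : (2:ℝ) ^ (-(1.8:ℝ) * m) + (2:ℝ) ^ (-(n:ℝ)) ≤ (2:ℝ) ^ (-(1.5:ℝ) * m)) :
    ∀ a : Fin n → Bool,
      (if (0.9:ℝ) * p * n ≤ (wtB a : ℝ) then pBiased n p a else 0)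
        + (∑ x ∈ univ.filter (fun x : Fin n → Bool => (wtB x : ℝ) < 0.9 * p * n),
            pBiased n p x) * ((2:ℝ)^n)⁻¹
      ≤ (2:ℝ) ^ (-(1.5:ℝ) * m) := by
  intro a
  rcases Nat.eq_zero_or_pos n with hn | hn
  · exfalso
    subst hn
    have hm : m = 0 := by
      have : (m:ℝ) ≤ 0 := by simpa using hmn
      exact_mod_cast le_antisymm (by exact_mod_cast this) (Nat.zero_le m)
    subst hm
    norm_num [Real.rpow_zero] at hlarge
  have hnR : (0:ℝ) < n := by exact_mod_cast hn
  have hq0 : (0:ℝ) < 1 - p := by linarith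
  have hq1 : (1:ℝ) - p ≤ 1 := by linarith
  have hpq : p ≤ 1 - p := by linarith
  have hp1 : p ≤ 1 := by linarith
  -- first term ≤ 2 ^ (-1.8 m)
  have h1 : (if (0.9:ℝ) * p * n ≤ (wtB a : ℝ) then pBiased n p a else 0)
      ≤ (2:ℝ) ^ (-(1.8:ℝ) * m) := by
    split_ifs with hw
    · set w : ℕ := wtB a
      have hwn : w ≤ n := by
        simpa [w, wtB] using Finset.card_filter_le (univ : Finset (Fin n)) (fun i => a i)
      have hwnR : (w:ℝ) ≤ n := by exact_mod_cast hwn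
      have key : pBiased n p a
          ≤ p ^ ((0.9:ℝ) * p * n) * (1-p) ^ ((0.9:ℝ) * (1-p) * n) := by
        rw [pBiased_eq]
        have e1 : (p:ℝ) ^ (w:ℕ) = p ^ (w:ℝ) := by rw [Real.rpow_natCast]
        have e2 : ((1:ℝ)-p) ^ (n - w : ℕ) = (1-p) ^ ((n:ℝ) - w) := by
          rw [← Real.rpow_natCast, Nat.cast_sub hwn]
        rw [e1, e2]
        have s1 : p ^ (w:ℝ) = p ^ ((0.9:ℝ)*p*n) * p ^ ((w:ℝ) - 0.9*p*n) := by
          rw [← Real.rpow_add hp0]; ring_nf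
        rw [s1]
        have h2 : p ^ ((w:ℝ) - 0.9*p*n) ≤ (1-p) ^ ((w:ℝ) - 0.9*p*n) :=
          Real.rpow_le_rpow (le_of_lt hp0) hpq (by linarith)
        have h3 : (1-p) ^ ((w:ℝ) - 0.9*p*n) * (1-p) ^ ((n:ℝ) - w)
            = (1-p) ^ ((n:ℝ) - 0.9*p*n) := by
          rw [← Real.rpow_add hq0]; ring_nf
        have h4 : (1-p) ^ ((n:ℝ) - 0.9*p*n) ≤ (1-p) ^ ((0.9:ℝ)*(1-p)*n) := by
          apply Real.rpow_le_rpow_of_exponent_ge hq0 hq1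
          nlinarith
        calc p ^ ((0.9:ℝ)*p*n) * p ^ ((w:ℝ) - 0.9*p*n) * (1-p) ^ ((n:ℝ) - w)
            ≤ p ^ ((0.9:ℝ)*p*n) * ((1-p) ^ ((w:ℝ) - 0.9*p*n) * (1-p) ^ ((n:ℝ) - w)) := by
              rw [mul_assoc]
              apply mul_le_mul_of_nonneg_left _ (Real.rpow_nonneg (le_of_lt hp0) _)
              exact mul_le_mul_of_nonneg_right h2 (Real.rpow_nonneg (le_of_lt hq0) _)
          _ = p ^ ((0.9:ℝ)*p*n) * (1-p) ^ ((n:ℝ) - 0.9*p*n) := by rw [h3]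
          _ ≤ p ^ ((0.9:ℝ)*p*n) * (1-p) ^ ((0.9:ℝ)*(1-p)*n) :=
              mul_le_mul_of_nonneg_left h4 (Real.rpow_nonneg (le_of_lt hp0) _)
      have ent : p ^ ((0.9:ℝ) * p * n) * (1-p) ^ ((0.9:ℝ) * (1-p) * n)
          = (2:ℝ) ^ (-(1.8:ℝ) * m) := by
        have hne : (n:ℝ) ≠ 0 := ne_of_gt hnR
        have e3 : (2:ℝ) ^ (Real.logb 2 p * ((0.9:ℝ)*p*n)) = p ^ ((0.9:ℝ)*p*n) := by
          rw [Real.rpow_mul (by norm_num : (0:ℝ) ≤ 2),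
            Real.rpow_logb (by norm_num) (by norm_num) hp0]
        have e4 : (2:ℝ) ^ (Real.logb 2 (1-p) * ((0.9:ℝ)*(1-p)*n)) = ((1:ℝ)-p) ^ ((0.9:ℝ)*(1-p)*n) := by
          rw [Real.rpow_mul (by norm_num : (0:ℝ) ≤ 2),
            Real.rpow_logb (by norm_num) (by norm_num) hq0]
        rw [← e3, ← e4, ← Real.rpow_add (by norm_num : (0:ℝ) < 2)]
        congr 1
        have hb : Real.logb 2 p * ((0.9:ℝ)*p*n) + Real.logb 2 (1-p) * ((0.9:ℝ)*(1-p)*n)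
            = -(0.9*(n:ℝ)) * binEnt p := by
          rw [binEnt]; ring
        rw [hb, hH]
        field_simp
        ring
      calc pBiased n p a ≤ _ := key
        _ = _ := ent
    · positivity
  -- second term ≤ 2 ^ (-n)
  have h2 : (∑ x ∈ univ.filter (fun x : Fin n → Bool => (wtB x : ℝ) < 0.9 * p * n),
      pBiased n p x) * ((2:ℝ)^n)⁻¹ ≤ (2:ℝ) ^ (-(n:ℝ)) := by
    have hsum : (∑ x ∈ univ.filter (fun x : Fin n → Bool => (wtB x : ℝ) < 0.9 * p * n),
        pBiased n p x) ≤ 1 := by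
      rw [← sum_pBiased n p]
      apply Finset.sum_le_sum_of_subset_of_nonneg (Finset.filter_subset _ _)
      intro x _ _
      rw [pBiased_eq]
      positivity
    have : ((2:ℝ)^n)⁻¹ = (2:ℝ) ^ (-(n:ℝ)) := by
      rw [Real.rpow_neg (by norm_num), Real.rpow_natCast]
    rw [← this]
    calc _ ≤ 1 * ((2:ℝ)^n)⁻¹ := by
          apply mul_le_mul_of_nonneg_right hsum; positivity
      _ = ((2:ℝ)^n)⁻¹ := one_mul _
  calc _ ≤ (2:ℝ) ^ (-(1.8:ℝ) * m) + (2:ℝ) ^ (-(n:ℝ)) := add_le_add h1 h2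
    _ ≤ _ := hlarge
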